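/- If f(z) = Σ_{n≥0} a_n z^n is holomorphic on the unit disk D with |f(z)| ≤ 1 for all z ∈ D, then |a_n| ≤ 1 - |a_0|^2 for all n ≥ 1. -/

import Mathlib

open Metric Complex Filter

private lemma key_ineq (c w : ℂ) :
    Complex.normSq (1 - (starRingEnd ℂ) c * w) - Complex.normSq (w - c)
      = (1 - Complex.normSq c) * (1 - Complex.normSq w) := by
  simp only [Complex.normSq_apply, Complex.sub_re, Complex.sub_im, Complex.mul_re,
    Complex.mul_im, Complex.conj_re, Complex.conj_im, Complex.one_re, Complex.one_im]
  ring

private lemma hasFPS' (f : ℂ → ℂ) (a : ℕ → ℂ)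
    (hsum : ∀ z ∈ ball (0 : ℂ) 1, HasSum (fun n : ℕ => a n * z ^ n) (f z)) :
    HasFPowerSeriesOnBall f (FormalMultilinearSeries.ofScalars ℂ a) 0 1 := by
  constructor
  · refine ENNReal.le_of_forall_nnreal_lt fun r hr => ?_
    have hr1 : (r : ℝ) < 1 := by exact_mod_cast hr
    have hz : ((r : ℝ) : ℂ) ∈ ball (0 : ℂ) 1 := by
      simp [mem_ball_zero_iff, _root_.abs_of_nonneg r.2, hr1]
    have hs := (hsum _ hz).summable
    have h0 : Filter.Tendsto (fun n : ℕ => ‖a n * ((r:ℝ):ℂ) ^ n‖) atTop (nhds 0) := by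
      simpa using hs.tendsto_atTop_zero.norm
    have h0' : Filter.Tendsto
        (fun n : ℕ => ‖FormalMultilinearSeries.ofScalars ℂ a n‖ * (r:ℝ) ^ n) atTop (nhds 0) := by
      refine h0.congr fun n => ?_
      rw [norm_mul, norm_pow, Complex.norm_real, Real.norm_eq_abs,
        FormalMultilinearSeries.ofScalars_norm, NNReal.abs_eq]
    exact (FormalMultilinearSeries.ofScalars ℂ a).le_radius_of_isBigO (h0'.isBigO_one ℝ)
  · exact one_pos
  · intro y hy
    have hy' : y ∈ ball (0:ℂ) 1 := by
      simpa [mem_ball_zero_iff, ← ofReal_norm, ENNReal.ofReal_lt_one] using hy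
    have := hsum y hy'
    simp only [zero_add]
    refine this.congr_fun fun n => ?_
    rw [FormalMultilinearSeries.ofScalars_apply_eq, smul_eq_mul]

private lemma lemma0 (f : ℂ → ℂ) (a : ℕ → ℂ)
    (hsum : ∀ z ∈ ball (0 : ℂ) 1, HasSum (fun n : ℕ => a n * z ^ n) (f z))
    (hbd : ∀ z ∈ ball (0 : ℂ) 1, ‖f z‖ < 1) :
    ‖a 1‖ ≤ 1 - ‖a 0‖ ^ 2 := by
  have hball : (0:ℂ) ∈ ball (0:ℂ) 1 := by simp
  have hps := hasFPS' f a hsum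
  have hf0 : f 0 = a 0 := by
    refine (hsum 0 hball).unique ?_
    have h := hasSum_single (f := fun n : ℕ => a n * (0:ℂ) ^ n) 0
      (fun n hn => by simp [zero_pow hn])
    simpa using h
  set c : ℂ := a 0 with hc_def
  have hc : ‖c‖ < 1 := by rw [← hf0]; exact hbd 0 hball
  have hcoeff : (FormalMultilinearSeries.ofScalars ℂ a).coeff 1 = a 1 := by
    simp [FormalMultilinearSeries.coeff, FormalMultilinearSeries.ofScalars]
  have hderiv : HasDerivAt f (a 1) 0 := hcoeff ▸ hps.hasFPowerSeriesAt.hasDerivAt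
  have hdf : DifferentiableOn ℂ f (ball (0:ℂ) 1) := by
    have := hps.differentiableOn
    rw [← ENNReal.coe_one, Metric.emetric_ball_nnreal] at this
    simpa using this
  set den : ℂ → ℂ := fun z => 1 - (starRingEnd ℂ) c * f z with hden_def
  have hnormlt : ∀ z ∈ ball (0:ℂ) 1, ‖(starRingEnd ℂ) c * f z‖ < 1 := by
    intro z hz
    rw [norm_mul, RCLike.norm_conj]
    calc ‖c‖ * ‖f z‖ ≤ 1 * ‖f z‖ := mul_le_mul_of_nonneg_right hc.le (norm_nonneg _)
      _ < 1 := by rw [one_mul]; exact hbd z hz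
  have hden : ∀ z ∈ ball (0:ℂ) 1, den z ≠ 0 := by
    intro z hz h0
    have h1 : (starRingEnd ℂ) c * f z = 1 := by
      have := sub_eq_zero.mp h0; linear_combination -this
    have h2 := hnormlt z hz
    rw [h1] at h2
    simp at h2
  set φ : ℂ → ℂ := fun z => (f z - c) / den z with hφ_def
  have hdφ : DifferentiableOn ℂ φ (ball (0:ℂ) 1) :=
    DifferentiableOn.div (hdf.sub_const c)
      ((differentiableOn_const 1).sub ((differentiableOn_const _).mul hdf)) hden
  have hφ0 : φ 0 = 0 := by simp [hφ_def, hf0]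
  have hc' : ‖c‖ < 1 := by exact hc
  have hmaps : Set.MapsTo φ (ball (0:ℂ) 1) (ball (φ 0) 1) := by
    intro z hz
    rw [hφ0, mem_ball_zero_iff]
    have hfz : ‖f z‖ < 1 := by
      exact hbd z hz
    have hpos : 0 < Complex.normSq (den z) - Complex.normSq (f z - c) := by
      rw [hden_def, key_ineq c (f z)]
      have h1 : Complex.normSq c < 1 := by
        rw [← Complex.sq_norm]; nlinarith [norm_nonneg c]
      have h2 : Complex.normSq (f z) < 1 := by
        rw [← Complex.sq_norm]; nlinarith [norm_nonneg (f z)]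
      nlinarith
    have hlt : ‖f z - c‖ < ‖den z‖ := by
      have h1 : ‖f z - c‖ ^ 2 < ‖den z‖ ^ 2 := by
        rw [Complex.sq_norm, Complex.sq_norm]
        linarith
      exact lt_of_pow_lt_pow_left₀ 2 (norm_nonneg _) h1
    rw [hφ_def]
    simp only [norm_div]
    exact (div_lt_one (lt_of_le_of_lt (norm_nonneg _) hlt)).mpr hlt
  have hschwarz : ‖deriv φ 0‖ ≤ 1 := by
    rw [hφ0] at hmaps
    have := Complex.norm_deriv_le_one_of_mapsTo_ball (c := 0) (R := 1) hdφ
      (by rw [hφ0]; exact hmaps.mono_right ball_subset_closedBall) one_pos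
    simpa using this
  have hden0 : den 0 = ((1 - ‖c‖ ^ 2 : ℝ) : ℂ) := by
    simp only [hden_def, hf0, ← hc_def]
    rw [show (starRingEnd ℂ) c * c = ((Complex.normSq c : ℝ) : ℂ) from
      Complex.normSq_eq_conj_mul_self.symm]
    rw [Complex.normSq_eq_norm_sq]
    push_cast
    ring
  have hden0ne : den 0 ≠ 0 := hden 0 hball
  have hdden : HasDerivAt den (-((starRingEnd ℂ) c * a 1)) 0 := by
    have := (hderiv.const_mul ((starRingEnd ℂ) c)).const_sub 1
    simpa [hden_def] using this
  have hdnum : HasDerivAt (fun z => f z - c) (a 1) 0 := hderiv.sub_const c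
  have hdφ0 : HasDerivAt φ
      ((a 1 * den 0 - (f 0 - c) * (-((starRingEnd ℂ) c * a 1))) / den 0 ^ 2) 0 :=
    hdnum.div hdden hden0ne
  have hval : deriv φ 0 = a 1 / den 0 := by
    rw [hdφ0.deriv, hf0, sub_self, zero_mul, sub_zero, pow_two]
    field_simp
  have ha1 : a 1 = deriv φ 0 * den 0 := by
    rw [hval, div_mul_cancel₀ _ hden0ne]
  have hnorm_den0 : ‖den 0‖ = 1 - ‖c‖ ^ 2 := by
    rw [hden0, Complex.norm_real, Real.norm_eq_abs, _root_.abs_of_nonneg]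
    nlinarith [norm_nonneg c]
  calc ‖a 1‖ = ‖deriv φ 0‖ * ‖den 0‖ := by rw [ha1, norm_mul]
    _ ≤ 1 * ‖den 0‖ := mul_le_mul_of_nonneg_right hschwarz (norm_nonneg _)
    _ = 1 - ‖c‖ ^ 2 := by rw [one_mul, hnorm_den0]

private lemma lemma1 (f : ℂ → ℂ) (a : ℕ → ℂ)
    (hsum : ∀ z ∈ ball (0 : ℂ) 1, HasSum (fun n : ℕ => a n * z ^ n) (f z))
    (hbd : ∀ z ∈ ball (0 : ℂ) 1, ‖f z‖ ≤ 1) :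
    ‖a 1‖ ≤ 1 - ‖a 0‖ ^ 2 := by
  have key : ∀ t : ℝ, t ∈ Set.Ioo (0:ℝ) 1 → t * ‖a 1‖ + t ^ 2 * ‖a 0‖ ^ 2 ≤ 1 := by
    intro t ht
    have h := lemma0 (fun z => (t:ℂ) * f z) (fun n => (t:ℂ) * a n)
      (fun z hz => by
        have := (hsum z hz).mul_left (t:ℂ)
        refine this.congr_fun fun n => ?_
        ring)
      (fun z hz => by
        calc ‖(t:ℂ) * f z‖ = t * ‖f z‖ := by
              rw [norm_mul, Complex.norm_real, Real.norm_eq_abs, _root_.abs_of_nonneg ht.1.le]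
          _ ≤ t * 1 := mul_le_mul_of_nonneg_left (hbd z hz) ht.1.le
          _ < 1 := by rw [mul_one]; exact ht.2)
    have ht' : ‖(t:ℂ)‖ = t := by
      rw [Complex.norm_real, Real.norm_eq_abs, _root_.abs_of_nonneg ht.1.le]
    rw [norm_mul, norm_mul, ht', mul_pow] at h
    nlinarith [norm_nonneg (a 0), norm_nonneg (a 1)]
  have hlim : Filter.Tendsto (fun t : ℝ => t * ‖a 1‖ + t ^ 2 * ‖a 0‖ ^ 2)
      (nhdsWithin 1 (Set.Iio 1)) (nhds (1 * ‖a 1‖ + 1 ^ 2 * ‖a 0‖ ^ 2)) := by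
    apply Filter.Tendsto.mono_left _ nhdsWithin_le_nhds
    exact (by continuity : Continuous fun t : ℝ => t * ‖a 1‖ + t ^ 2 * ‖a 0‖ ^ 2).tendsto 1
  have hev : ∀ᶠ t in nhdsWithin (1:ℝ) (Set.Iio 1),
      t * ‖a 1‖ + t ^ 2 * ‖a 0‖ ^ 2 ≤ 1 := by
    filter_upwards [Ioo_mem_nhdsLT_of_mem (show (1:ℝ) ∈ Set.Ioc 0 1 from ⟨one_pos, le_refl 1⟩)]
      with t ht using key t ht
  have := le_of_tendsto hlim hev
  linarith

theorem stmt_0 (f : ℂ → ℂ) (a : ℕ → ℂ)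
    (hsum : ∀ z ∈ ball (0 : ℂ) 1, HasSum (fun n : ℕ => a n * z ^ n) (f z))
    (hbd : ∀ z ∈ ball (0 : ℂ) 1, ‖f z‖ ≤ 1) :
    ∀ n : ℕ, 1 ≤ n → ‖a n‖ ≤ 1 - ‖a 0‖ ^ 2 := by
  intro n hn
  have hn0 : n ≠ 0 := by omega
  set ω : ℂ := Complex.exp (2 * Real.pi * Complex.I / n) with hω_def
  have hprim : IsPrimitiveRoot ω n := Complex.isPrimitiveRoot_exp n hn0
  have hω1 : ‖ω‖ = 1 := Complex.norm_eq_one_of_pow_eq_one hprim.pow_eq_one hn0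
  set g : ℂ → ℂ := fun z => ((n:ℂ))⁻¹ * ∑ k ∈ Finset.range n, f (ω ^ k * z) with hg_def
  -- membership of rotated points
  have hrot : ∀ (k : ℕ) (z : ℂ), z ∈ ball (0:ℂ) 1 → ω ^ k * z ∈ ball (0:ℂ) 1 := by
    intro k z hz
    rw [mem_ball_zero_iff] at hz ⊢
    rw [norm_mul, norm_pow, hω1, one_pow, one_mul]
    exact hz
  have hnn : ((n:ℂ)) ≠ 0 := by exact_mod_cast hn0
  -- the averaged series
  have hg : ∀ z ∈ ball (0:ℂ) 1,
      HasSum (fun m : ℕ => (if n ∣ m then a m else 0) * z ^ m) (g z) := by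
    intro z hz
    have h1 : HasSum (fun m : ℕ => ∑ k ∈ Finset.range n, a m * (ω ^ k * z) ^ m)
        (∑ k ∈ Finset.range n, f (ω ^ k * z)) :=
      hasSum_sum fun k _ => hsum _ (hrot k z hz)
    have h2 := h1.mul_left ((n:ℂ))⁻¹
    refine h2.congr_fun fun m => ?_
    have hterm : ∀ k : ℕ, a m * (ω ^ k * z) ^ m = a m * z ^ m * ((ω ^ m) ^ k) := by
      intro k
      rw [mul_pow, ← pow_mul, ← pow_mul, mul_comm k m]
      ring
    rw [Finset.sum_congr rfl fun k _ => hterm k, ← Finset.mul_sum]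
    have hgeom : ∑ k ∈ Finset.range n, (ω ^ m) ^ k = if n ∣ m then (n:ℂ) else 0 := by
      by_cases hdvd : n ∣ m
      · rw [if_pos hdvd, (hprim.pow_eq_one_iff_dvd m).mpr hdvd]
        simp
      · rw [if_neg hdvd, geom_sum_eq (fun h => hdvd ((hprim.pow_eq_one_iff_dvd m).mp h))]
        rw [← pow_mul, mul_comm m n, pow_mul, hprim.pow_eq_one, one_pow, sub_self, zero_div]
    rw [hgeom]
    by_cases hdvd : n ∣ m
    · rw [if_pos hdvd, if_pos hdvd]
      field_simp
    · rw [if_neg hdvd, if_neg hdvd]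
      ring
  -- bound for g
  have hgbd : ∀ z ∈ ball (0:ℂ) 1, ‖g z‖ ≤ 1 := by
    intro z hz
    rw [hg_def]
    calc ‖((n:ℂ))⁻¹ * ∑ k ∈ Finset.range n, f (ω ^ k * z)‖
        = ((n:ℝ))⁻¹ * ‖∑ k ∈ Finset.range n, f (ω ^ k * z)‖ := by
          rw [norm_mul, norm_inv, Complex.norm_natCast]
      _ ≤ ((n:ℝ))⁻¹ * (n * 1) := by
          refine mul_le_mul_of_nonneg_left ?_ (by positivity)
          refine (norm_sum_le _ _).trans ?_
          rw [show ((n:ℝ)) * 1 = ∑ _k ∈ Finset.range n, (1:ℝ) by simp]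
          exact Finset.sum_le_sum fun k _ => hbd _ (hrot k z hz)
      _ = 1 := by
          field_simp
  -- nth root map
  set G : ℂ → ℂ := fun w => g (w ^ ((n:ℂ))⁻¹) with hG_def
  set A : ℕ → ℂ := fun j => a (n * j) with hA_def
  have hroot : ∀ w : ℂ, (w ^ ((n:ℂ))⁻¹) ^ n = w := fun w => Complex.cpow_nat_inv_pow w hn0
  have hrootball : ∀ w ∈ ball (0:ℂ) 1, w ^ ((n:ℂ))⁻¹ ∈ ball (0:ℂ) 1 := by
    intro w hw
    rw [mem_ball_zero_iff] at hw ⊢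
    by_contra h
    push_neg at h
    have h1 : (1:ℝ) ≤ ‖w ^ ((n:ℂ))⁻¹‖ ^ n := one_le_pow₀ h
    rw [← norm_pow, hroot w] at h1
    linarith
  have hinj : Function.Injective fun j : ℕ => n * j := fun x y hxy => by
    simpa [hn0] using hxy
  have hGsum : ∀ w ∈ ball (0:ℂ) 1, HasSum (fun j : ℕ => A j * w ^ j) (G w) := by
    intro w hw
    have hz := hrootball w hw
    have h := hg _ hz
    have h0 : ∀ m ∉ Set.range (fun j : ℕ => n * j),
        (if n ∣ m then a m else 0) * (w ^ ((n:ℂ))⁻¹) ^ m = 0 := by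
      intro m hm
      have : ¬ n ∣ m := by
        rintro ⟨j, rfl⟩
        exact hm ⟨j, rfl⟩
      rw [if_neg this, zero_mul]
    have h2 := (hinj.hasSum_iff h0).mpr h
    refine h2.congr_fun fun j => ?_
    simp only [Function.comp]
    rw [if_pos ⟨j, rfl⟩, pow_mul, hroot w]
  have hGbd : ∀ w ∈ ball (0:ℂ) 1, ‖G w‖ ≤ 1 := fun w hw => hgbd _ (hrootball w hw)
  have := lemma1 G A hGsum hGbd
  rw [hA_def] at this
  simpa using this
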